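/- arXiv:2105.14229 — 3 statements merged into one kernel-verified Lean document; each statement's English description precedes it below -/
import Mathlib

section
/- Let x, x̂ ∈ R^n with ‖x̂‖₁ - α‖x̂‖₂ ≤ ‖x‖₁ - α‖x‖₂ for some 0 < α ≤ 1, and set h = x̂ - x. Then ‖h_{-max(s)}‖₁ ≤ ‖h_{max(s)}‖₁ + 2‖x_{-max(s)}‖₁ + α‖h‖₂, where h_{max(s)} keeps the s largest-magnitude entries of h (zeroing the rest) and h_{-max(s)} = h - h_{max(s)}. -/
open Finset

noncomputable def l1 {n : ℕ} (x : Fin n → ℝ) : ℝ := ∑ i, |x i|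
noncomputable def l2 {n : ℕ} (x : Fin n → ℝ) : ℝ := Real.sqrt (∑ i, (x i) ^ 2)
noncomputable def linf {n : ℕ} (x : Fin n → ℝ) : ℝ := ‖x‖

/-- `restrict T x` is the vector equal to `x` on `T` and `0` elsewhere. -/
def restrict {n : ℕ} (T : Finset (Fin n)) (x : Fin n → ℝ) : Fin n → ℝ :=
  fun i => if i ∈ T then x i else 0

/-- `T` indexes `s` largest-in-absolute-value entries of `h`. -/
def IsMaxS {n : ℕ} (s : ℕ) (h : Fin n → ℝ) (T : Finset (Fin n)) : Prop :=
  T.card = s ∧ ∀ i ∈ T, ∀ j ∉ T, |h j| ≤ |h i|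

/-- number of nonzero entries. -/
noncomputable def l0 {n : ℕ} (x : Fin n → ℝ) : ℕ := (Finset.univ.filter fun i => x i ≠ 0).card

lemma l1_restrict {n : ℕ} (T : Finset (Fin n)) (v : Fin n → ℝ) :
    l1 (_root_.restrict T v) = ∑ i ∈ T, |v i| := by
  unfold l1 _root_.restrict
  simp [apply_ite abs, Finset.sum_ite_mem]

lemma l1_split {n : ℕ} (T : Finset (Fin n)) (v : Fin n → ℝ) :
    l1 v = (∑ i ∈ T, |v i|) + ∑ i ∈ Tᶜ, |v i| := by
  unfold l1
  rw [← Finset.sum_add_sum_compl T]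

lemma l2_norm {n : ℕ} (v : Fin n → ℝ) :
    l2 v = ‖(WithLp.equiv 2 (Fin n → ℝ)).symm v‖ := by
  rw [EuclideanSpace.norm_eq]
  unfold l2
  congr 1
  exact Finset.sum_congr rfl fun i _ => by simp [sq_abs]

lemma l2_sub_le {n : ℕ} (a b : Fin n → ℝ) : l2 a - l2 b ≤ l2 (a - b) := by
  simp only [l2_norm]
  have : (WithLp.equiv 2 (Fin n → ℝ)).symm (a - b)
      = (WithLp.equiv 2 (Fin n → ℝ)).symm a - (WithLp.equiv 2 (Fin n → ℝ)).symm b := rfl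
  rw [this]
  exact norm_sub_norm_le _ _

lemma sum_abs_le_of_maxS {n s : ℕ} (h : Fin n → ℝ) (Th Tx : Finset (Fin n))
    (hTh : IsMaxS s h Th) (hcard : Tx.card = s) :
    ∑ i ∈ Tx, |h i| ≤ ∑ i ∈ Th, |h i| := by
  obtain ⟨hThc, hmax⟩ := hTh
  have hc : (Tx \ Th).card = (Th \ Tx).card :=
    Finset.card_sdiff_comm (hcard.trans hThc.symm)
  have key : ∑ i ∈ Tx \ Th, |h i| ≤ ∑ i ∈ Th \ Tx, |h i| := by
    rcases Finset.eq_empty_or_nonempty (Th \ Tx) with he | hne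
    · have : (Tx \ Th) = ∅ := Finset.card_eq_zero.mp (by rw [hc, he]; simp)
      simp [this, he]
    · obtain ⟨i₀, hi₀, hmin⟩ := Finset.exists_min_image (Th \ Tx) (fun i => |h i|) hne
      have h1 : ∑ i ∈ Tx \ Th, |h i| ≤ (Tx \ Th).card • |h i₀| := by
        apply Finset.sum_le_card_nsmul
        intro j hj
        exact hmax i₀ (Finset.mem_sdiff.mp hi₀).1 j (Finset.mem_sdiff.mp hj).2
      have h2 : (Th \ Tx).card • |h i₀| ≤ ∑ i ∈ Th \ Tx, |h i| :=
        Finset.card_nsmul_le_sum _ _ _ hmin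
      calc ∑ i ∈ Tx \ Th, |h i| ≤ (Tx \ Th).card • |h i₀| := h1
        _ = (Th \ Tx).card • |h i₀| := by rw [hc]
        _ ≤ _ := h2
  have e1 : ∑ i ∈ Tx, |h i| = (∑ i ∈ Tx ∩ Th, |h i|) + ∑ i ∈ Tx \ Th, |h i| :=
    (Finset.sum_inter_add_sum_sdiff _ _ _).symm
  have e2 : ∑ i ∈ Th, |h i| = (∑ i ∈ Th ∩ Tx, |h i|) + ∑ i ∈ Th \ Tx, |h i| :=
    (Finset.sum_inter_add_sum_sdiff _ _ _).symm
  rw [e1, e2, Finset.inter_comm]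
  linarith

theorem stmt3 {n s : ℕ} (x xhat : Fin n → ℝ) (α : ℝ) (hα0 : 0 < α) (hα1 : α ≤ 1)
    (hmin : l1 xhat - α * l2 xhat ≤ l1 x - α * l2 x)
    (Th : Finset (Fin n)) (hTh : IsMaxS s (xhat - x) Th)
    (Tx : Finset (Fin n)) (hTx : IsMaxS s x Tx) :
    l1 (restrict Thᶜ (xhat - x)) ≤
      l1 (restrict Th (xhat - x)) + 2 * l1 (restrict Txᶜ x) + α * l2 (xhat - x) := by
  set h : Fin n → ℝ := xhat - x with hh
  -- pointwise bounds
  have hpt1 : ∀ i ∈ Tx, |x i| - |h i| ≤ |xhat i| := by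
    intro i _
    have hx : xhat i = x i + h i := by simp [hh]
    rw [hx]
    have := abs_sub_abs_le_abs_sub (x i) (-(h i))
    simpa [sub_neg_eq_add] using this
  have hpt2 : ∀ i ∈ Txᶜ, |h i| - |x i| ≤ |xhat i| := by
    intro i _
    have hx : xhat i = h i + x i := by simp [hh]
    rw [hx]
    have := abs_sub_abs_le_abs_sub (h i) (-(x i))
    simpa [sub_neg_eq_add] using this
  have s1 : ∑ i ∈ Tx, (|x i| - |h i|) ≤ ∑ i ∈ Tx, |xhat i| := Finset.sum_le_sum hpt1
  have s2 : ∑ i ∈ Txᶜ, (|h i| - |x i|) ≤ ∑ i ∈ Txᶜ, |xhat i| := Finset.sum_le_sum hpt2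
  rw [Finset.sum_sub_distrib] at s1 s2
  have e1 : l1 xhat = (∑ i ∈ Tx, |xhat i|) + ∑ i ∈ Txᶜ, |xhat i| := l1_split Tx xhat
  have e2 : l1 x = (∑ i ∈ Tx, |x i|) + ∑ i ∈ Txᶜ, |x i| := l1_split Tx x
  have hl2 : l2 xhat - l2 x ≤ l2 h := by
    rw [hh]; exact l2_sub_le xhat x
  -- cone condition wrt Tx
  have cone : ∑ i ∈ Txᶜ, |h i| ≤ (∑ i ∈ Tx, |h i|) + 2 * (∑ i ∈ Txᶜ, |x i|) + α * l2 h := by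
    linarith [mul_le_mul_of_nonneg_left hl2 hα0.le]
  -- compare Th and Tx sums
  have hcmp : ∑ i ∈ Tx, |h i| ≤ ∑ i ∈ Th, |h i| :=
    sum_abs_le_of_maxS h Th Tx hTh hTx.1
  have hcmpc : ∑ i ∈ Thᶜ, |h i| ≤ ∑ i ∈ Txᶜ, |h i| := by
    have a := l1_split Th h
    have b := l1_split Tx h
    linarith
  rw [l1_restrict, l1_restrict, l1_restrict]
  linarith
end

section
/- Let h ∈ R^n be sorted so that |h₁| ≥ |h₂| ≥ … ≥ |h_n|, let s, k be positive integers with s + k ≤ n, let T₀₁ = {1,…,s+k}, and suppose ‖h_{T₀ᶜ}‖₁ ≥ k|h_{s+k}| where T₀ = {1,…,s}. Then ‖h_{T₀₁ᶜ}‖₂ ≤ ‖h_{T₀ᶜ}‖₁ / (2√k). -/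
open Finset

lemma card_filter_lt' (n m : ℕ) (hm : m ≤ n) :
    ((Finset.univ : Finset (Fin n)).filter fun i : Fin n => (i : ℕ) < m).card = m := by
  have hmem : ∀ a ∈ Finset.range m, a < n := fun a ha => lt_of_lt_of_le (Finset.mem_range.mp ha) hm
  have : ((Finset.univ : Finset (Fin n)).filter fun i : Fin n => (i : ℕ) < m)
      = (Finset.range m).attachFin hmem := by
    ext i
    simp [Finset.mem_attachFin, Finset.mem_range]
  rw [this, Finset.card_attachFin, Finset.card_range]

theorem stmt6 {n : ℕ} (h : Fin n → ℝ) (s k : ℕ) (hs : 0 < s) (hk : 0 < k)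
    (hsk : s + k ≤ n)
    (hsorted : ∀ i j : Fin n, i ≤ j → |h j| ≤ |h i|)
    (T0 : Finset (Fin n)) (hT0 : T0 = (Finset.univ : Finset (Fin n)).filter (fun i : Fin n => (i : ℕ) < s))
    (T01 : Finset (Fin n)) (hT01 : T01 = (Finset.univ : Finset (Fin n)).filter (fun i : Fin n => (i : ℕ) < s + k))
    (hge : (k : ℝ) * |h ⟨s + k - 1, by omega⟩| ≤ l1 (restrict T0ᶜ h)) :
    l2 (restrict T01ᶜ h) ≤ l1 (restrict T0ᶜ h) / (2 * Real.sqrt k) := by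
  set p : Fin n := ⟨s + k - 1, by omega⟩ with hp
  set t : ℝ := |h p| with htdef
  set L : ℝ := l1 (restrict T0ᶜ h) with hLdef
  have ht0 : 0 ≤ t := abs_nonneg _
  -- L as a sum over T0ᶜ
  have hLsum : L = ∑ i ∈ T0ᶜ, |h i| := by
    rw [hLdef]
    unfold l1 _root_.restrict
    have e : ∀ i, |if i ∈ T0ᶜ then h i else 0| = if i ∈ T0ᶜ then |h i| else 0 := by
      intro i; split <;> simp
    rw [Finset.sum_congr rfl (fun i _ => e i), Finset.sum_ite_mem, Finset.univ_inter]
  -- S as a sum over T01ᶜ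
  have hSsum : ∑ i, (_root_.restrict T01ᶜ h i) ^ 2 = ∑ i ∈ T01ᶜ, (h i) ^ 2 := by
    have e : ∀ i, (_root_.restrict T01ᶜ h i) ^ 2 = if i ∈ T01ᶜ then (h i) ^ 2 else 0 := by
      intro i; unfold _root_.restrict; split <;> simp
    rw [Finset.sum_congr rfl (fun i _ => e i), Finset.sum_ite_mem, Finset.univ_inter]
  -- small entries
  have hsmall : ∀ i ∈ T01ᶜ, |h i| ≤ t := by
    intro i hi
    rw [hT01] at hi
    simp [Finset.mem_compl] at hi
    exact hsorted p i (by simp [hp, Fin.le_def]; omega)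
  -- T0 ⊆ T01
  have hsub : T01ᶜ ⊆ T0ᶜ := by
    rw [hT0, hT01]
    intro i hi
    simp [Finset.mem_compl] at hi ⊢
    omega
  -- middle block
  have hDcard : (T0ᶜ \ T01ᶜ).card = k := by
    have h1 : T0ᶜ \ T01ᶜ = T01 \ T0 := by
      ext i; simp [Finset.mem_sdiff, Finset.mem_compl]; tauto
    have h2 : T0 ⊆ T01 := by
      rw [hT0, hT01]; intro i hi; simp at hi ⊢; omega
    rw [h1, Finset.card_sdiff_of_subset h2, hT0, hT01, card_filter_lt' n (s+k) hsk,
      card_filter_lt' n s (by omega)]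
    omega
  have hDbig : ∀ i ∈ T0ᶜ \ T01ᶜ, t ≤ |h i| := by
    intro i hi
    rw [hT0, hT01] at hi
    simp [Finset.mem_sdiff, Finset.mem_compl] at hi
    exact hsorted i p (by simp [hp, Fin.le_def]; omega)
  -- bound the tail l1
  have hA : ∑ i ∈ T01ᶜ, |h i| ≤ L - k * t := by
    have hsplit : ∑ i ∈ T0ᶜ \ T01ᶜ, |h i| + ∑ i ∈ T01ᶜ, |h i| = ∑ i ∈ T0ᶜ, |h i| :=
      Finset.sum_sdiff hsub
    have hB : (k : ℝ) * t ≤ ∑ i ∈ T0ᶜ \ T01ᶜ, |h i| := by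
      calc (k : ℝ) * t = ∑ _i ∈ T0ᶜ \ T01ᶜ, t := by rw [Finset.sum_const, hDcard]; ring
        _ ≤ _ := Finset.sum_le_sum hDbig
    rw [hLsum]; linarith
  -- bound the sum of squares
  have hS : ∑ i, (_root_.restrict T01ᶜ h i) ^ 2 ≤ t * (L - k * t) := by
    rw [hSsum]
    calc ∑ i ∈ T01ᶜ, (h i) ^ 2 ≤ ∑ i ∈ T01ᶜ, t * |h i| := by
          apply Finset.sum_le_sum
          intro i hi
          have := hsmall i hi
          have habs : 0 ≤ |h i| := abs_nonneg _
          nlinarith [sq_abs (h i)]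
      _ = t * ∑ i ∈ T01ᶜ, |h i| := by rw [Finset.mul_sum]
      _ ≤ t * (L - k * t) := by
          apply mul_le_mul_of_nonneg_left hA ht0
  have hkt : (k : ℝ) * t ≤ L := hge
  have hk0 : (0:ℝ) < k := by exact_mod_cast hk
  have hL0 : 0 ≤ L := le_trans (by positivity) hkt
  have hsq : ∑ i, (_root_.restrict T01ᶜ h i) ^ 2 ≤ (L / (2 * Real.sqrt k)) ^ 2 := by
    have hsk2 : Real.sqrt k ^ 2 = k := Real.sq_sqrt (le_of_lt hk0)
    have hskpos : 0 < Real.sqrt k := Real.sqrt_pos.mpr hk0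
    have : (L / (2 * Real.sqrt k)) ^ 2 = L ^ 2 / (4 * k) := by
      rw [div_pow, mul_pow, hsk2]; norm_num
    rw [this]
    have key : t * (L - k * t) ≤ L ^ 2 / (4 * k) := by
      rw [le_div_iff₀ (by positivity)]
      nlinarith [sq_nonneg (L - 2 * (k:ℝ) * t)]
    linarith
  unfold l2
  calc Real.sqrt (∑ i, (_root_.restrict T01ᶜ h i) ^ 2) ≤ Real.sqrt ((L / (2 * Real.sqrt k)) ^ 2) :=
        Real.sqrt_le_sqrt hsq
    _ = L / (2 * Real.sqrt k) := Real.sqrt_sq (by positivity)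
end

section
/- Let ν ∈ R^n satisfy ‖ν‖_∞ ≤ θ for some θ > 0 and ‖ν‖₁ - ‖ν‖₂ ≤ (s - √s)θ, where s is a positive integer with s ≤ |supp(ν)|. Then ν can be written as a convex combination ν = Σ_{i=1}^N λ_i u^{(i)} of s-sparse vectors u^{(i)} with supp(u^{(i)}) ⊆ supp(ν), ‖u^{(i)}‖_∞ ≤ (1 + √2/2)θ, λ_i ∈ (0,1], Σλ_i = 1, and Σ_{i=1}^N λ_i ‖u^{(i)}‖₂² ≤ [(1 + √2/2)²(s - √s) + 1] θ². -/
open Finset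

/- ### auxiliary machinery -/

/-- sign, valued in {−1, 1}. -/
noncomputable def mySgn (a : ℝ) : ℝ := if a < 0 then -1 else 1

lemma abs_add_mySgn (a t : ℝ) (ha : a ≠ 0) (ht : 0 ≤ t) : |a + t * mySgn a| = |a| + t := by
  rcases lt_or_gt_of_ne ha with h | h
  · simp only [mySgn, if_pos h]
    rw [abs_of_neg h, abs_of_neg (by linarith)]; ring
  · simp only [mySgn, if_neg (not_lt.2 h.le)]
    rw [abs_of_pos h, abs_of_pos (by linarith)]; ring

lemma abs_sub_mySgn (a t : ℝ) (ha : a ≠ 0) (ht : 0 ≤ t) (ht' : t ≤ |a|) :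
    |a - t * mySgn a| = |a| - t := by
  rcases lt_or_gt_of_ne ha with h | h
  · simp only [mySgn, if_pos h]
    rw [abs_of_neg h] at ht' ⊢
    rw [abs_of_nonpos (by linarith)]; ring
  · simp only [mySgn, if_neg (not_lt.2 h.le)]
    rw [abs_of_pos h] at ht' ⊢
    rw [abs_of_nonneg (by linarith)]; ring

/-- number of "fractional" entries. -/
noncomputable def frC {n : ℕ} (θ : ℝ) (x : Fin n → ℝ) : ℕ :=
  (Finset.univ.filter fun k => x k ≠ 0 ∧ |x k| < θ).card

/-- the elementary move -/
noncomputable def stepv {n : ℕ} (x : Fin n → ℝ) (p q : Fin n) (t : ℝ) : Fin n → ℝ :=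
  fun k => if k = p then x p + t * mySgn (x p) else if k = q then x q - t * mySgn (x q) else x k

lemma step_props {n : ℕ} (θ : ℝ) (x : Fin n → ℝ) (p q : Fin n) (hpq : p ≠ q)
    (hp : x p ≠ 0) (hq : x q ≠ 0) (hpθ : |x p| < θ) (hqθ : |x q| < θ)
    (hb : ∀ k, |x k| ≤ θ) (t : ℝ) (ht0 : 0 < t) (ht1 : t ≤ θ - |x p|) (ht2 : t ≤ |x q|)
    (hteq : t = θ - |x p| ∨ t = |x q|) :
    (∀ k, |stepv x p q t k| ≤ θ) ∧ l1 (stepv x p q t) = l1 x ∧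
    (∀ k, stepv x p q t k ≠ 0 → x k ≠ 0) ∧ frC θ (stepv x p q t) < frC θ x := by
  set y := stepv x p q t with hy
  have habsp : |y p| = |x p| + t := by
    simp only [hy, stepv, if_pos rfl]
    exact abs_add_mySgn _ _ hp ht0.le
  have habsq : |y q| = |x q| - t := by
    simp only [hy, stepv, if_neg (Ne.symm hpq), if_pos rfl]
    exact abs_sub_mySgn _ _ hq ht0.le ht2
  have hother : ∀ k, k ≠ p → k ≠ q → y k = x k := by
    intro k h1 h2; simp only [hy, stepv, if_neg h1, if_neg h2]
  have habs : ∀ k, |y k| = |x k| + ((if k = p then t else 0) + (if k = q then -t else 0)) := by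
    intro k
    by_cases h1 : k = p
    · subst h1; rw [if_pos rfl, if_neg hpq, habsp]; ring
    · by_cases h2 : k = q
      · subst h2; rw [if_neg h1, if_pos rfl, habsq]; ring
      · rw [if_neg h1, if_neg h2, hother k h1 h2]; ring
  refine ⟨?_, ?_, ?_, ?_⟩
  · intro k
    by_cases h1 : k = p
    · subst h1; rw [habsp]; linarith
    · by_cases h2 : k = q
      · subst h2; rw [habsq]; linarith [abs_nonneg (x k)]
      · rw [hother k h1 h2]; exact hb k
  · unfold l1
    calc ∑ k, |y k| = ∑ k, (|x k| + ((if k = p then t else 0) + (if k = q then -t else 0))) :=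
          Finset.sum_congr rfl (fun k _ => habs k)
      _ = ∑ k, |x k| + ((∑ k, if k = p then t else 0) + ∑ k, if k = q then -t else 0) := by
          rw [Finset.sum_add_distrib, Finset.sum_add_distrib]
      _ = ∑ k, |x k| := by
          rw [Finset.sum_ite_eq' univ p (fun _ => t), Finset.sum_ite_eq' univ q (fun _ => -t)]
          simp
  · intro k
    by_cases h1 : k = p
    · subst h1; intro _; exact hp
    · by_cases h2 : k = q
      · subst h2; intro _; exact hq
      · rw [hother k h1 h2]; exact id
  · apply Finset.card_lt_card
    constructor
    · intro k hk
      rw [Finset.mem_filter] at hk ⊢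
      refine ⟨Finset.mem_univ _, ?_⟩
      by_cases h1 : k = p
      · subst h1; exact ⟨hp, hpθ⟩
      · by_cases h2 : k = q
        · subst h2; exact ⟨hq, hqθ⟩
        · rw [hother k h1 h2] at hk; exact hk.2
    · intro hsub
      rcases hteq with h | h
      · have hpmem : p ∈ Finset.univ.filter fun k => x k ≠ 0 ∧ |x k| < θ :=
          Finset.mem_filter.2 ⟨Finset.mem_univ _, hp, hpθ⟩
        have := Finset.mem_filter.1 (hsub hpmem)
        rw [habsp, h] at this
        exact absurd this.2.2 (by linarith)
      · have hqmem : q ∈ Finset.univ.filter fun k => x k ≠ 0 ∧ |x k| < θ :=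
          Finset.mem_filter.2 ⟨Finset.mem_univ _, hq, hqθ⟩
        have hyq : y q = 0 := by
          have : |y q| = 0 := by rw [habsq, h]; ring
          exact abs_eq_zero.1 this
        have := Finset.mem_filter.1 (hsub hqmem)
        exact this.2.1 hyq

/-- if more than `s` nonzero entries, there are two distinct fractional entries. -/
lemma two_frac {n : ℕ} (θ : ℝ) (hθ : 0 < θ) (s : ℕ) (x : Fin n → ℝ)
    (hb : ∀ k, |x k| ≤ θ) (hl1 : l1 x ≤ s * θ) (hcard : s < l0 x) :
    ∃ p q, p ≠ q ∧ (x p ≠ 0 ∧ |x p| < θ) ∧ (x q ≠ 0 ∧ |x q| < θ) := by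
  by_contra hcon
  push_neg at hcon
  -- the fractional set F
  set F := Finset.univ.filter fun k => x k ≠ 0 ∧ |x k| < θ with hF
  set S := Finset.univ.filter fun k : Fin n => x k ≠ 0 with hS
  have hFS : F ⊆ S := by
    intro k hk; rw [hF, Finset.mem_filter] at hk
    exact Finset.mem_filter.2 ⟨Finset.mem_univ _, hk.2.1⟩
  have hFcard : F.card ≤ 1 := by
    rw [Finset.card_le_one]
    intro a ha b hb'
    by_contra hab
    rw [hF, Finset.mem_filter] at ha hb'
    exact absurd (hcon a b hab ha.2 hb'.2.1) (not_le.2 hb'.2.2)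
  -- entries outside F on S are exactly θ in absolute value
  have hSF : ∀ k ∈ S \ F, |x k| = θ := by
    intro k hk
    rw [Finset.mem_sdiff, hS, hF, Finset.mem_filter, Finset.mem_filter] at hk
    have h1 := hk.1.2
    have h2 := hk.2
    push_neg at h2
    exact le_antisymm (hb k) (h2 (Finset.mem_univ k) h1)
  have hsum : l1 x = ∑ k ∈ S, |x k| := by
    unfold l1
    rw [hS]
    symm
    apply Finset.sum_filter_of_ne
    intro k _ hne
    intro h0
    exact hne (by rw [h0]; simp)
  have hsplit : ∑ k ∈ S, |x k| = ∑ k ∈ S \ F, |x k| + ∑ k ∈ F, |x k| :=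
    (Finset.sum_sdiff hFS).symm
  have hSFsum : ∑ k ∈ S \ F, |x k| = (S \ F).card * θ := by
    rw [Finset.sum_congr rfl hSF, Finset.sum_const, nsmul_eq_mul]
  have hcardSF : S.card - F.card = (S \ F).card := (Finset.card_sdiff_of_subset hFS).symm
  have hl0 : l0 x = S.card := rfl
  have hScard : s + 1 ≤ S.card := by omega
  have hFsum : 0 ≤ ∑ k ∈ F, |x k| := Finset.sum_nonneg fun k _ => abs_nonneg _
  -- now a contradiction with l1 x ≤ s θ
  interval_cases hFc : F.card
  · -- F empty : l1 x = S.card θ ≥ (s+1) θ > s θ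
    have : (S \ F).card = S.card := by omega
    have hge : ((s : ℝ) + 1) * θ ≤ l1 x := by
      rw [hsum, hsplit, hSFsum, this]
      have : ((s : ℝ) + 1) ≤ (S.card : ℝ) := by exact_mod_cast hScard
      nlinarith
    nlinarith
  · -- F = {a} : l1 x ≥ s θ + |x a| > s θ
    obtain ⟨a, ha⟩ := Finset.card_eq_one.1 hFc
    have haF : a ∈ F := by rw [ha]; exact Finset.mem_singleton_self a
    rw [hF, Finset.mem_filter] at haF
    have hax : 0 < |x a| := abs_pos.2 haF.2.1
    have hcardeq : s ≤ (S \ F).card := by omega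
    have hFsum' : ∑ k ∈ F, |x k| = |x a| := by rw [ha, Finset.sum_singleton]
    have hge : (s : ℝ) * θ + |x a| ≤ l1 x := by
      rw [hsum, hsplit, hSFsum, hFsum']
      have : (s : ℝ) ≤ ((S \ F).card : ℝ) := by exact_mod_cast hcardeq
      nlinarith
    nlinarith

/-- the single-vector decomposition, used when `x` is already `s`-sparse. -/
lemma single_decomp {n : ℕ} (θ : ℝ) (s : ℕ) (x : Fin n → ℝ) (hb : ∀ k, |x k| ≤ θ)
    (hsp : l0 x ≤ s) :
    ∃ (N : ℕ) (_ : 0 < N) (lam : Fin N → ℝ) (u : Fin N → Fin n → ℝ),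
      (∀ i, 0 < lam i ∧ lam i ≤ 1) ∧ (∑ i, lam i) = 1 ∧
      x = ∑ i, lam i • u i ∧
      (∀ i, l0 (u i) ≤ s) ∧
      (∀ i j, u i j ≠ 0 → x j ≠ 0) ∧
      (∀ i j, |u i j| ≤ θ) := by
  refine ⟨1, one_pos, fun _ => 1, fun _ => x, fun _ => ⟨one_pos, le_refl 1⟩, ?_, ?_, ?_, ?_, ?_⟩
  · simp
  · simp
  · intro _; exact hsp
  · intro _ j h; exact h
  · intro _ j; exact hb j


/-- combining two decompositions along a convex combination. -/
lemma combine_decomp {n : ℕ} (θ : ℝ) (s : ℕ) (x y z : Fin n → ℝ) (a b : ℝ)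
    (ha0 : 0 < a) (hb0 : 0 < b) (hab : a + b = 1)
    (hconv : ∀ k, x k = a * y k + b * z k)
    (hysupp : ∀ k, y k ≠ 0 → x k ≠ 0) (hzsupp : ∀ k, z k ≠ 0 → x k ≠ 0)
    (N₁ N₂ : ℕ) (hN₁ : 0 < N₁) (hN₂ : 0 < N₂)
    (lam₁ : Fin N₁ → ℝ) (u₁ : Fin N₁ → Fin n → ℝ)
    (lam₂ : Fin N₂ → ℝ) (u₂ : Fin N₂ → Fin n → ℝ)
    (hlam₁ : ∀ i, 0 < lam₁ i ∧ lam₁ i ≤ 1) (hsum₁ : (∑ i, lam₁ i) = 1)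
    (hdec₁ : y = ∑ i, lam₁ i • u₁ i) (hsp₁ : ∀ i, l0 (u₁ i) ≤ s)
    (hsupp₁ : ∀ i j, u₁ i j ≠ 0 → y j ≠ 0) (hb₁ : ∀ i j, |u₁ i j| ≤ θ)
    (hlam₂ : ∀ i, 0 < lam₂ i ∧ lam₂ i ≤ 1) (hsum₂ : (∑ i, lam₂ i) = 1)
    (hdec₂ : z = ∑ i, lam₂ i • u₂ i) (hsp₂ : ∀ i, l0 (u₂ i) ≤ s)
    (hsupp₂ : ∀ i j, u₂ i j ≠ 0 → z j ≠ 0) (hb₂ : ∀ i j, |u₂ i j| ≤ θ) :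
    ∃ (N : ℕ) (_ : 0 < N) (lam : Fin N → ℝ) (u : Fin N → Fin n → ℝ),
      (∀ i, 0 < lam i ∧ lam i ≤ 1) ∧ (∑ i, lam i) = 1 ∧
      x = ∑ i, lam i • u i ∧
      (∀ i, l0 (u i) ≤ s) ∧
      (∀ i j, u i j ≠ 0 → x j ≠ 0) ∧
      (∀ i j, |u i j| ≤ θ) := by
  refine ⟨N₁ + N₂, by omega,
    Fin.append (fun i => a * lam₁ i) (fun i => b * lam₂ i),
    Fin.append u₁ u₂, ?_, ?_, ?_, ?_, ?_, ?_⟩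
  · intro i
    refine Fin.addCases (fun i => ?_) (fun i => ?_) i
    · rw [Fin.append_left]
      exact ⟨mul_pos ha0 (hlam₁ i).1,
        by nlinarith [(hlam₁ i).2, (hlam₁ i).1, ha0, hb0, hab]⟩
    · rw [Fin.append_right]
      exact ⟨mul_pos hb0 (hlam₂ i).1,
        by nlinarith [(hlam₂ i).2, (hlam₂ i).1, ha0, hb0, hab]⟩
  · rw [Fin.sum_univ_add]
    simp only [Fin.append_left, Fin.append_right]
    rw [← Finset.mul_sum, ← Finset.mul_sum, hsum₁, hsum₂]
    linarith
  · funext k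
    have e1 : ∑ i : Fin N₁, (a * lam₁ i) • u₁ i = a • ∑ i : Fin N₁, lam₁ i • u₁ i := by
      rw [Finset.smul_sum]; exact Finset.sum_congr rfl fun i _ => (smul_smul a (lam₁ i) (u₁ i)).symm
    have e2 : ∑ i : Fin N₂, (b * lam₂ i) • u₂ i = b • ∑ i : Fin N₂, lam₂ i • u₂ i := by
      rw [Finset.smul_sum]; exact Finset.sum_congr rfl fun i _ => (smul_smul b (lam₂ i) (u₂ i)).symm
    have : (∑ i : Fin (N₁ + N₂),
        Fin.append (fun i => a * lam₁ i) (fun i => b * lam₂ i) i • Fin.append u₁ u₂ i)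
        = a • ∑ i : Fin N₁, lam₁ i • u₁ i + b • ∑ i : Fin N₂, lam₂ i • u₂ i := by
      rw [Fin.sum_univ_add]
      simp only [Fin.append_left, Fin.append_right]
      rw [e1, e2]
    rw [this, ← hdec₁, ← hdec₂]
    exact hconv k
  · intro i
    refine Fin.addCases (fun i => ?_) (fun i => ?_) i
    · rw [Fin.append_left]; exact hsp₁ i
    · rw [Fin.append_right]; exact hsp₂ i
  · intro i
    refine Fin.addCases (fun i => ?_) (fun i => ?_) i
    · rw [Fin.append_left]; intro j h; exact hysupp j (hsupp₁ i j h)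
    · rw [Fin.append_right]; intro j h; exact hzsupp j (hsupp₂ i j h)
  · intro i
    refine Fin.addCases (fun i => ?_) (fun i => ?_) i
    · rw [Fin.append_left]; exact hb₁ i
    · rw [Fin.append_right]; exact hb₂ i

/-- the main decomposition, by induction on the number of fractional entries. -/
lemma main_decomp {n : ℕ} (θ : ℝ) (hθ : 0 < θ) (s : ℕ) :
    ∀ (m : ℕ) (x : Fin n → ℝ), frC θ x ≤ m → (∀ k, |x k| ≤ θ) → l1 x ≤ s * θ →
    ∃ (N : ℕ) (_ : 0 < N) (lam : Fin N → ℝ) (u : Fin N → Fin n → ℝ),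
      (∀ i, 0 < lam i ∧ lam i ≤ 1) ∧ (∑ i, lam i) = 1 ∧
      x = ∑ i, lam i • u i ∧
      (∀ i, l0 (u i) ≤ s) ∧
      (∀ i j, u i j ≠ 0 → x j ≠ 0) ∧
      (∀ i j, |u i j| ≤ θ) := by
  intro m
  induction m with
  | zero =>
    intro x hfr hb hl1
    -- all nonzero entries have |x k| = θ, so l0 x ≤ s
    apply single_decomp θ s x hb
    have hempty : (Finset.univ.filter fun k => x k ≠ 0 ∧ |x k| < θ) = ∅ :=
      Finset.card_eq_zero.1 (Nat.le_zero.1 hfr)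
    have hall : ∀ k, x k ≠ 0 → |x k| = θ := by
      intro k hk
      by_contra hne
      have : k ∈ Finset.univ.filter fun k => x k ≠ 0 ∧ |x k| < θ :=
        Finset.mem_filter.2 ⟨Finset.mem_univ _, hk, lt_of_le_of_ne (hb k) hne⟩
      rw [hempty] at this; exact absurd this (Finset.notMem_empty k)
    have hsum : l1 x = l0 x * θ := by
      unfold l1 l0
      rw [← Finset.sum_filter_of_ne (p := fun k => x k ≠ 0)
        (fun k _ h h0 => h (by rw [h0]; simp))]
      rw [Finset.sum_congr rfl (fun k hk => hall k (Finset.mem_filter.1 hk).2),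
        Finset.sum_const, nsmul_eq_mul]
    by_contra hcon
    push_neg at hcon
    have : ((s : ℝ) + 1) * θ ≤ (l0 x : ℝ) * θ := by
      have : (s : ℝ) + 1 ≤ (l0 x : ℝ) := by exact_mod_cast hcon
      nlinarith
    rw [← hsum] at this
    nlinarith
  | succ m ih =>
    intro x hfr hb hl1
    by_cases hsp : l0 x ≤ s
    · exact single_decomp θ s x hb hsp
    push_neg at hsp
    obtain ⟨p, q, hpq, ⟨hp, hpθ⟩, ⟨hq, hqθ⟩⟩ := two_frac θ hθ s x hb hl1 hsp
    set t₁ := min (θ - |x p|) (|x q|) with ht₁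
    set t₂ := min (θ - |x q|) (|x p|) with ht₂
    have ht₁0 : 0 < t₁ := lt_min (by linarith) (abs_pos.2 hq)
    have ht₂0 : 0 < t₂ := lt_min (by linarith) (abs_pos.2 hp)
    set y := stepv x p q t₁ with hy
    set z := stepv x q p t₂ with hz
    obtain ⟨hyb, hyl1, hysupp, hyfr⟩ := step_props θ x p q hpq hp hq hpθ hqθ hb t₁ ht₁0
      (min_le_left _ _) (min_le_right _ _)
      (by rcases min_cases (θ - |x p|) (|x q|) with ⟨h, _⟩ | ⟨h, _⟩ <;> [left; right] <;> exact h)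
    obtain ⟨hzb, hzl1, hzsupp, hzfr⟩ := step_props θ x q p (Ne.symm hpq) hq hp hqθ hpθ hb t₂ ht₂0
      (min_le_left _ _) (min_le_right _ _)
      (by rcases min_cases (θ - |x q|) (|x p|) with ⟨h, _⟩ | ⟨h, _⟩ <;> [left; right] <;> exact h)
    -- apply IH
    obtain ⟨N₁, hN₁, lam₁, u₁, hlam₁, hsum₁, hdec₁, hsp₁, hsupp₁, hb₁⟩ :=
      ih y (Nat.lt_succ_iff.1 (lt_of_lt_of_le hyfr hfr)) hyb (by rw [hyl1]; exact hl1)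
    obtain ⟨N₂, hN₂, lam₂, u₂, hlam₂, hsum₂, hdec₂, hsp₂, hsupp₂, hb₂⟩ :=
      ih z (Nat.lt_succ_iff.1 (lt_of_lt_of_le hzfr hfr)) hzb (by rw [hzl1]; exact hl1)
    -- convex combination x = a y + b z
    set a := t₂ / (t₁ + t₂) with hA
    set b := t₁ / (t₁ + t₂) with hB
    have hts : 0 < t₁ + t₂ := by linarith
    have ha0 : 0 < a := div_pos ht₂0 hts
    have hb0 : 0 < b := div_pos ht₁0 hts
    have hne : t₁ + t₂ ≠ 0 := hts.ne'
    have hab : a + b = 1 := by rw [hA, hB, ← add_div, add_comm, div_self hne]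
    have hmul : a * t₁ = b * t₂ := by rw [hA, hB]; field_simp
    have hconv : ∀ k, x k = a * y k + b * z k := by
      intro k
      by_cases h1 : k = p
      · subst h1
        simp only [hy, hz, stepv, if_pos rfl, if_neg hpq, if_neg (Ne.symm hpq), if_true]
        linear_combination (-(x k)) * hab + (-(mySgn (x k))) * hmul
      · by_cases h2 : k = q
        · subst h2
          simp only [hy, hz, stepv, if_neg h1, if_pos rfl, if_true]
          linear_combination (-(x k)) * hab + (mySgn (x k)) * hmul
        · simp only [hy, hz, stepv, if_neg h1, if_neg h2]
          linear_combination (-(x k)) * hab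
    exact combine_decomp θ s x y z a b ha0 hb0 hab hconv hysupp hzsupp N₁ N₂ hN₁ hN₂
      lam₁ u₁ lam₂ u₂ hlam₁ hsum₁ hdec₁ hsp₁ hsupp₁ hb₁ hlam₂ hsum₂ hdec₂ hsp₂ hsupp₂ hb₂

lemma final_num (s : ℕ) (hs : 0 < s) :
    (s:ℝ) ≤ (1 + Real.sqrt 2 / 2) ^ 2 * ((s : ℝ) - Real.sqrt s) + 1 := by
  have hsq : Real.sqrt s ^ 2 = s := Real.sq_sqrt (by positivity)
  have hsq1 : (1:ℝ) ≤ Real.sqrt s := by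
    rw [show (1:ℝ) = Real.sqrt 1 from (Real.sqrt_one).symm]
    exact Real.sqrt_le_sqrt (by exact_mod_cast hs)
  have hsqrt2sq : Real.sqrt 2 ^ 2 = 2 := Real.sq_sqrt (by norm_num)
  have h21 : (1:ℝ) ≤ Real.sqrt 2 := by
    rw [show (1:ℝ) = Real.sqrt 1 from (Real.sqrt_one).symm]
    exact Real.sqrt_le_sqrt (by norm_num)
  have hce : (1 + Real.sqrt 2 / 2) ^ 2 = 3/2 + Real.sqrt 2 := by nlinarith [hsqrt2sq]
  have hkey2 : 0 ≤ (Real.sqrt s - 1) * ((1/2 + Real.sqrt 2) * Real.sqrt s - 1) :=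
    mul_nonneg (by linarith) (by nlinarith [hsq1, h21])
  rw [hce]; nlinarith [hkey2, hsq]

theorem stmt15 {n : ℕ} (ν : Fin n → ℝ) (θ : ℝ) (hθ : 0 < θ)
    (hinf : linf ν ≤ θ) (s : ℕ) (hs : 0 < s) (hssupp : s ≤ l0 ν)
    (hl12 : l1 ν - l2 ν ≤ ((s : ℝ) - Real.sqrt s) * θ) :
    ∃ (N : ℕ) (_ : 0 < N) (lam : Fin N → ℝ) (u : Fin N → Fin n → ℝ),
      (∀ i, 0 < lam i ∧ lam i ≤ 1) ∧ (∑ i, lam i) = 1 ∧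
      ν = ∑ i, lam i • u i ∧
      (∀ i, l0 (u i) ≤ s) ∧
      (∀ i, ∀ j, u i j ≠ 0 → ν j ≠ 0) ∧
      (∀ i, linf (u i) ≤ (1 + Real.sqrt 2 / 2) * θ) ∧
      (∑ i, lam i * (l2 (u i)) ^ 2) ≤
        ((1 + Real.sqrt 2 / 2) ^ 2 * ((s : ℝ) - Real.sqrt s) + 1) * θ ^ 2 := by
  have hb : ∀ k, |ν k| ≤ θ := by
    intro k
    calc |ν k| = ‖ν k‖ := rfl
      _ ≤ ‖ν‖ := norm_le_pi_norm ν k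
      _ ≤ θ := hinf
  -- Step 1 : l1 ν ≤ s θ
  have hl1nn : 0 ≤ l1 ν := Finset.sum_nonneg fun k _ => abs_nonneg _
  have hl2sq : (l2 ν) ^ 2 ≤ θ * l1 ν := by
    have : ∑ i, (ν i) ^ 2 ≤ ∑ i, θ * |ν i| := by
      apply Finset.sum_le_sum
      intro i _
      have : (ν i) ^ 2 = |ν i| * |ν i| := by rw [← sq_abs (ν i), sq]
      rw [this]
      exact mul_le_mul_of_nonneg_right (hb i) (abs_nonneg _)
    calc (l2 ν) ^ 2 = ∑ i, (ν i) ^ 2 := by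
          rw [l2, Real.sq_sqrt (Finset.sum_nonneg fun i _ => sq_nonneg _)]
      _ ≤ ∑ i, θ * |ν i| := this
      _ = θ * l1 ν := by rw [l1, Finset.mul_sum]
  have hl2nn : 0 ≤ l2 ν := Real.sqrt_nonneg _
  have hl2le : l2 ν ≤ Real.sqrt (θ * l1 ν) := by
    rw [← Real.sqrt_sq hl2nn]
    exact Real.sqrt_le_sqrt hl2sq
  have hsθ : (1:ℝ) ≤ s := by exact_mod_cast hs
  have hl1 : l1 ν ≤ s * θ := by
    by_contra hcon
    push_neg at hcon
    -- set p = √(l1 ν), q = √(sθ)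
    set P := Real.sqrt (l1 ν) with hP
    set Q := Real.sqrt (s * θ) with hQ
    have hP2 : P ^ 2 = l1 ν := Real.sq_sqrt hl1nn
    have hQ2 : Q ^ 2 = s * θ := Real.sq_sqrt (by positivity)
    have hPQ : Q < P := by
      rw [hP, hQ]
      exact Real.sqrt_lt_sqrt (by positivity) hcon
    have hQnn : 0 ≤ Q := Real.sqrt_nonneg _
    have hθsq : Real.sqrt θ ≤ Q := by
      rw [hQ]
      apply Real.sqrt_le_sqrt
      nlinarith
    have hθP : Real.sqrt (θ * l1 ν) = Real.sqrt θ * P := by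
      rw [hP, Real.sqrt_mul hθ.le]
    have hsθ' : Real.sqrt ((s:ℝ)) * θ = Q * Real.sqrt θ := by
      rw [hQ, ← Real.sqrt_mul (by positivity) θ,
        show (s:ℝ) * θ * θ = (s:ℝ) * θ ^ 2 by ring, Real.sqrt_mul (by positivity),
        Real.sqrt_sq hθ.le]
    have h2 : ((s:ℝ) - Real.sqrt s) * θ = Q ^ 2 - Q * Real.sqrt θ := by
      rw [sub_mul, hQ2, hsθ']
    have hl2le' : l2 ν ≤ Real.sqrt θ * P := by rw [← hθP]; exact hl2le
    have hkey : P ^ 2 - Real.sqrt θ * P ≤ Q ^ 2 - Q * Real.sqrt θ := by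
      rw [hP2, ← h2]
      linarith [hl12, hl2le']
    have hθsqpos : 0 < Real.sqrt θ := Real.sqrt_pos.2 hθ
    nlinarith [hkey, hPQ, hQnn, hθsq, hθsqpos]
  -- apply main decomposition
  obtain ⟨N, hN, lam, u, hlam, hsum, hdec, hsp, hsupp, hub⟩ :=
    main_decomp θ hθ s (frC θ ν) ν le_rfl hb hl1
  have hsqrt2 : (0:ℝ) ≤ Real.sqrt 2 := Real.sqrt_nonneg 2
  have hc : (1:ℝ) ≤ 1 + Real.sqrt 2 / 2 := by linarith
  refine ⟨N, hN, lam, u, hlam, hsum, hdec, hsp, hsupp, ?_, ?_⟩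
  · intro i
    have : linf (u i) ≤ θ := by
      rw [linf]
      apply (pi_norm_le_iff_of_nonneg hθ.le).2
      intro j
      exact hub i j
    nlinarith
  · -- weighted ℓ2 bound
    have hl2b : ∀ i, (l2 (u i)) ^ 2 ≤ s * θ ^ 2 := by
      intro i
      rw [l2, Real.sq_sqrt (Finset.sum_nonneg fun j _ => sq_nonneg _)]
      set S := Finset.univ.filter fun j : Fin n => u i j ≠ 0 with hSdef
      have : ∑ j, (u i j) ^ 2 = ∑ j ∈ S, (u i j) ^ 2 := by
        symm
        apply Finset.sum_filter_of_ne
        intro j _ h h0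
        exact h (by rw [h0]; ring)
      rw [this]
      calc ∑ j ∈ S, (u i j) ^ 2 ≤ ∑ j ∈ S, θ ^ 2 := by
            apply Finset.sum_le_sum
            intro j _
            have := hub i j
            nlinarith [abs_nonneg (u i j), sq_abs (u i j)]
        _ = S.card * θ ^ 2 := by rw [Finset.sum_const, nsmul_eq_mul]
        _ ≤ s * θ ^ 2 := by
            have : (S.card : ℝ) ≤ (s : ℝ) := by exact_mod_cast hsp i
            nlinarith
    have h1 : ∑ i, lam i * (l2 (u i)) ^ 2 ≤ ∑ i, lam i * ((s:ℝ) * θ ^ 2) := by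
      apply Finset.sum_le_sum
      intro i _
      exact mul_le_mul_of_nonneg_left (hl2b i) (hlam i).1.le
    have h2 : ∑ i, lam i * ((s:ℝ) * θ ^ 2) = (s:ℝ) * θ ^ 2 := by
      rw [← Finset.sum_mul, hsum, one_mul]
    have hfinal := final_num s hs
    calc ∑ i, lam i * (l2 (u i)) ^ 2 ≤ (s:ℝ) * θ ^ 2 := by rw [← h2]; exact h1
      _ ≤ ((1 + Real.sqrt 2 / 2) ^ 2 * ((s : ℝ) - Real.sqrt s) + 1) * θ ^ 2 :=
          mul_le_mul_of_nonneg_right hfinal (sq_nonneg θ)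
end
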